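/- arXiv:2103.17097 — 3 statements merged into one kernel-verified Lean document; each statement's English description precedes it below -/
import Mathlib

section
/- In the power series ring ℤ_p[[π]], writing t = log(1+π) = Σ_{k≥0} (-1)^k π^{k+1}/(k+1) as a formal power series over ℚ_p, the formal inverse series π/t = 1 + b_1 π + b_2 π² + ⋯ has coefficients satisfying v_p(b_k) ≥ -k/(p-1) for all k ≥ 1. -/
open Finset IsUltrametricDist

lemma aux_pow (p v : ℕ) (hp : 2 ≤ p) : (p-1)*v + 1 ≤ p^v := by
  obtain ⟨q, rfl⟩ : ∃ q, p = q + 2 := ⟨p - 2, by omega⟩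
  have h : ∀ v : ℕ, (q+1)*v + 1 ≤ (q+2)^v := by
    intro v
    induction v with
    | zero => simp
    | succ v ih =>
      have h1 : 1 ≤ (q+2)^v := Nat.one_le_pow _ _ (by omega)
      rw [pow_succ]
      nlinarith
  simpa using h v


/-- In `ℚ_p[[π]]`, writing `t/π = Σ_{k≥0} (-1)^k π^k/(k+1)` (where `t = log(1+π)`),
the coefficients `b_k` of the formal multiplicative inverse `π/t = 1 + b_1 π + ⋯`
satisfy `v_p(b_k) ≥ -k/(p-1)` for all `k ≥ 1`. -/
theorem stmt4 (p : ℕ) [hp : Fact p.Prime] (b : PowerSeries ℚ_[p])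
    (hb : (PowerSeries.mk fun k => ((-1 : ℚ_[p]) ^ k) / ((k : ℚ_[p]) + 1)) * b = 1)
    (k : ℕ) (hk : 1 ≤ k) :
    (-(k : ℚ) / ((p : ℚ) - 1)) ≤ ((PowerSeries.coeff k b).valuation : ℚ) := by
  have hp2 : 2 ≤ p := hp.out.two_le
  have hp1 : (1:ℝ) < p := by exact_mod_cast hp.out.one_lt
  have hppos : (0:ℝ) < p := by linarith
  have hpm1 : (0:ℝ) < (p:ℝ) - 1 := by linarith
  set a : ℕ → ℚ_[p] := fun m => ((-1 : ℚ_[p]) ^ m) / ((m : ℚ_[p]) + 1) with ha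
  have hnormA : ∀ m : ℕ, ‖a m‖ ≤ (p:ℝ) ^ ((m:ℝ)/((p:ℝ)-1)) := by
    intro m
    have hm1 : ((m : ℚ_[p]) + 1) = ((m+1 : ℕ) : ℚ_[p]) := by push_cast; ring
    have hne : ((m+1 : ℕ) : ℚ_[p]) ≠ 0 := Nat.cast_ne_zero.mpr (Nat.succ_ne_zero m)
    set v : ℕ := padicValNat p (m+1) with hv
    have hval : ((m+1 : ℕ) : ℚ_[p]).valuation = v := Padic.valuation_natCast (p := p) (m+1)
    have hnorm : ‖((m+1 : ℕ) : ℚ_[p])‖ = (p:ℝ) ^ (-(v:ℤ)) := by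
      rw [Padic.norm_eq_zpow_neg_valuation hne, hval]
    have hnorma : ‖a m‖ = (p:ℝ) ^ (v:ℤ) := by
      rw [ha]
      simp only [norm_div, norm_pow, norm_neg, norm_one, one_pow, one_div, hm1, hnorm]
      rw [← zpow_neg, neg_neg]
    rw [hnorma]
    have hd : p ^ v ∣ m + 1 := pow_padicValNat_dvd
    have hle : p ^ v ≤ m + 1 := Nat.le_of_dvd (Nat.succ_pos m) hd
    have h1 : (p-1)*v ≤ m := by have := aux_pow p v hp2; omega
    have h2 : (v:ℝ) ≤ (m:ℝ)/((p:ℝ)-1) := by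
      rw [le_div_iff₀ hpm1]
      have : ((p-1:ℕ):ℝ) = (p:ℝ) - 1 := by
        have : (1:ℕ) ≤ p := by omega
        push_cast [this]; ring
      calc (v:ℝ) * ((p:ℝ)-1) = ((p-1:ℕ):ℝ) * v := by rw [this]; ring
        _ ≤ m := by exact_mod_cast h1
    calc (p:ℝ) ^ (v:ℤ) = (p:ℝ) ^ ((v:ℤ):ℝ) := (Real.rpow_intCast _ _).symm
      _ ≤ (p:ℝ) ^ ((m:ℝ)/((p:ℝ)-1)) := by
          apply Real.rpow_le_rpow_left_iff hp1 |>.mpr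
          exact_mod_cast h2
  have main : ∀ n : ℕ, ‖PowerSeries.coeff n b‖ ≤ (p:ℝ) ^ ((n:ℝ)/((p:ℝ)-1)) := by
    intro n
    induction n using Nat.strong_induction_on with
    | _ n ih =>
      rcases Nat.eq_zero_or_pos n with rfl | hn
      · have h0 := congrArg (PowerSeries.coeff 0) hb
        simp [PowerSeries.coeff_mul, ha] at h0
        simp [h0, Real.rpow_zero]
      · have hcn := congrArg (PowerSeries.coeff n) hb
        rw [PowerSeries.coeff_mul, PowerSeries.coeff_one, if_neg (by omega)] at hcn
        rw [Finset.Nat.sum_antidiagonal_eq_sum_range_succ_mk, Finset.sum_range_succ'] at hcn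
        have ha0 : a 0 = 1 := by simp [ha]
        simp only [Nat.sub_zero, ha0, one_mul] at hcn
        have hbn : PowerSeries.coeff n b
            = -∑ i ∈ Finset.range n, a (i+1) * PowerSeries.coeff (n-(i+1)) b := by
          simp only [PowerSeries.coeff_mk] at hcn
          linear_combination hcn
        rw [hbn, norm_neg]
        apply norm_sum_le_of_forall_le_of_nonneg (Real.rpow_nonneg hppos.le _)
        intro i hi
        rw [Finset.mem_range] at hi
        have hiadd : (i+1) + (n-(i+1)) = n := by omega
        calc ‖a (i+1) * PowerSeries.coeff (n-(i+1)) b‖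
            = ‖a (i+1)‖ * ‖PowerSeries.coeff (n-(i+1)) b‖ := norm_mul _ _
          _ ≤ (p:ℝ) ^ (((i+1:ℕ):ℝ)/((p:ℝ)-1)) * (p:ℝ) ^ (((n-(i+1):ℕ):ℝ)/((p:ℝ)-1)) := by
              apply mul_le_mul (hnormA _) (ih _ (by omega)) (norm_nonneg _)
                (Real.rpow_nonneg hppos.le _)
          _ = (p:ℝ) ^ ((n:ℝ)/((p:ℝ)-1)) := by
              rw [← Real.rpow_add hppos, ← add_div]
              congr 2
              exact_mod_cast congrArg (Nat.cast (R := ℝ)) hiadd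
  -- conclude
  by_cases hzero : PowerSeries.coeff k b = 0
  · rw [hzero]
    simp only [Padic.valuation_zero, Int.cast_zero]
    rw [div_nonpos_iff]
    right
    constructor
    · simp
    · have : (2:ℚ) ≤ p := by exact_mod_cast hp2
      linarith
  · have hnb := main k
    rw [Padic.norm_eq_zpow_neg_valuation hzero] at hnb
    set v : ℤ := (PowerSeries.coeff k b).valuation with hv
    have : ((-v:ℤ):ℝ) ≤ (k:ℝ)/((p:ℝ)-1) := by
      rw [← Real.rpow_le_rpow_left_iff hp1, Real.rpow_intCast]
      exact hnb
    have hR' : -(v:ℝ)*((p:ℝ)-1) ≤ (k:ℝ) := by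
      have := (le_div_iff₀ hpm1).mp this
      push_cast at this
      linarith
    have hR : -(k:ℝ) ≤ (v:ℝ)*((p:ℝ)-1) := by linarith
    rw [div_le_iff₀ (by exact_mod_cast hpm1 : (0:ℚ) < (p:ℚ)-1)]
    exact_mod_cast hR
end

section
/- For the ring homomorphism φ on ℤ_p[[π]] defined by φ(π) = (1+π)^p - 1 and ξ ∈ ℤ_p[[π]] (or in any φ-stable ℤ_p-algebra) with φ(ξ) = ξ^p + py for some y: the divided power φ(ξ^k/k!) equals (p^k/k!)·(y + (p-1)!·ξ^p/p!)^k, and p^k/k! ∈ ℤ_p for all k ≥ 0, so divided powers of ξ are stable under φ in the p-adically completed divided power envelope. -/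
/-- If `φ(ξ) = ξ^p + py`, then the divided power `φ(ξ^k/k!)` equals
`(p^k/k!)·(y + (p-1)!·ξ^p/p!)^k`, and `p^k/k! ∈ ℤ_p` for all `k ≥ 0`
(so divided powers of `ξ` are stable under `φ`). -/
theorem stmt9 (p : ℕ) [hp : Fact p.Prime]
    (A : Type*) [CommRing A] [Algebra ℚ A]
    (φ : A →+* A) (ξ y : A) (h : φ ξ = ξ ^ p + (p : A) * y) (k : ℕ) :
    φ (((Nat.factorial k : ℚ))⁻¹ • ξ ^ k)
        = ((p : ℚ) ^ k / (Nat.factorial k : ℚ)) •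
            (y + ((Nat.factorial (p - 1) : ℚ) / (Nat.factorial p : ℚ)) • ξ ^ p) ^ k ∧
      ‖(p : ℚ_[p]) ^ k / (Nat.factorial k : ℚ_[p])‖ ≤ 1 := by
  have hp1 := hp.out.one_lt
  have hp0 : (p : ℚ) ≠ 0 := Nat.cast_ne_zero.mpr hp.out.pos.ne'
  constructor
  · have hfac : ((Nat.factorial (p - 1) : ℚ) / (Nat.factorial p : ℚ)) = (p : ℚ)⁻¹ := by
      rw [show p = (p - 1) + 1 from by omega, Nat.factorial_succ]
      rw [show (p - 1) + 1 = p from by omega]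
      push_cast
      rw [mul_comm, div_mul_cancel_left₀ (by positivity : (Nat.factorial (p-1) : ℚ) ≠ 0)]
    rw [hfac]
    have hsm : (p : A) * y = (p : ℚ) • y := by
      rw [Algebra.smul_def, map_natCast]
    have key : (y + (p : ℚ)⁻¹ • ξ ^ p) = (p : ℚ)⁻¹ • φ ξ := by
      rw [h, smul_add, hsm, smul_smul, inv_mul_cancel₀ hp0, one_smul, add_comm]
    have hφs : ∀ (c : ℚ) (x : A), φ (c • x) = c • φ x := fun c x =>
      map_rat_smul φ.toAddMonoidHom c x
    rw [hφs, map_pow, key, smul_pow, smul_smul]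
    congr 1
    rw [inv_pow, div_eq_mul_inv, mul_comm ((p:ℚ)^k), mul_assoc, mul_inv_cancel₀ (pow_ne_zero k hp0), mul_one]
  · have hv : padicValNat p (Nat.factorial k) ≤ k := by
      have h1 : padicValNat p (Nat.factorial k) ≤ (p - 1) * padicValNat p (Nat.factorial k) :=
        Nat.le_mul_of_pos_left _ (by omega)
      rw [sub_one_mul_padicValNat_factorial] at h1
      omega
    have hf0 : ((Nat.factorial k : ℚ)) ≠ 0 := by positivity
    have hq0 : ((p : ℚ) ^ k / (Nat.factorial k : ℚ)) ≠ 0 := by positivity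
    have hrat : (p : ℚ_[p]) ^ k / (Nat.factorial k : ℚ_[p]) =
        (((p : ℚ) ^ k / (Nat.factorial k : ℚ) : ℚ) : ℚ_[p]) := by push_cast; ring
    rw [hrat, Padic.eq_padicNorm]
    have hval : padicValRat p ((p : ℚ) ^ k / (Nat.factorial k : ℚ))
        = k - padicValNat p (Nat.factorial k) := by
      rw [padicValRat.div (by positivity) hf0, padicValRat.pow (p : ℚ),
        padicValRat.self hp1, mul_one, ← padicValRat.of_nat (p := p) (n := Nat.factorial k)]
    rw [padicNorm.eq_zpow_of_nonzero hq0, hval]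
    have hle : -((k : ℤ) - padicValNat p (Nat.factorial k)) ≤ 0 := by
      simp only [neg_sub, sub_nonpos]
      exact_mod_cast hv
    have hfin : (p : ℚ) ^ (-((k : ℤ) - padicValNat p (Nat.factorial k))) ≤ 1 :=
      zpow_le_one_of_nonpos₀ (by exact_mod_cast hp1.le) hle
    exact_mod_cast hfin
end

section
/- Let A = ℤ_p[[π]] with divided power ideal structure: for k ≥ p^i, the element π^k/k! lies in p^{i-1}·A^{PD}, where A^{PD} is the p-adic completion of ℤ_p[[π]][π_1][ξ^n/n! : n ∈ ℕ] with ξ = π/π_1 and π_1^p ≡ π mod p. Concretely: writing π^k/k! = (ξ^k/k!)·π_1^k and π_1^{p^i} = π^{p^{i-1}} + p^i a, one gets π^k/k! ∈ p^{i-1} A^{PD} for k ≥ p^i. -/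
/-- Step lemma: raising `x + p^i * a` to the `p`-th power only changes it mod `p^(i+1)`. -/
lemma step_lemma (p : ℕ) (hp : p.Prime) {B : Type*} [CommRing B]
    (x a : B) (i : ℕ) (hi : 1 ≤ i) :
    ∃ r : B, (x + (p : B) ^ i * a) ^ p = x ^ p + (p : B) ^ (i + 1) * r := by
  have h := add_pow_prime_eq hp x ((p : B) ^ i * a)
  set S := ∑ k ∈ Finset.Ioo 0 p, x ^ k * ((p : B) ^ i * a) ^ (p - k) * ↑(p.choose k / p)
  have hS : ((p : B) ^ i * a) ∣ S := by
    apply Finset.dvd_sum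
    intro k hk
    rw [Finset.mem_Ioo] at hk
    have h1 : 1 ≤ p - k := Nat.sub_pos_of_lt hk.2
    have : ((p : B) ^ i * a) ^ (p - k) =
        ((p : B) ^ i * a) * ((p : B) ^ i * a) ^ (p - k - 1) := by
      rw [← pow_succ']
      congr 1
      omega
    rw [this]
    ring_nf
    exact ⟨x ^ k * ((p : B) ^ i * a) ^ (p - k - 1) * ↑(p.choose k / p), by ring⟩
  obtain ⟨t, ht⟩ := hS
  have hip : i + 1 ≤ i * p := by
    have := hp.two_le
    nlinarith
  refine ⟨(p : B) ^ (i * p - (i + 1)) * a ^ p +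
    x * a * ∑ k ∈ Finset.Ioo 0 p, x ^ (k - 1) * ((p : B) ^ i * a) ^ (p - k - 1) * ↑(p.choose k / p), ?_⟩
  have hpow : ((p : B) ^ i * a) ^ p = (p : B) ^ (i + 1) * ((p : B) ^ (i * p - (i + 1)) * a ^ p) := by
    rw [mul_pow, ← pow_mul, ← mul_assoc, ← pow_add]
    congr 2
    omega
  rw [h, hpow]
  ring

/-- Key lemma: `π₁ ^ (p ^ (m+1)) = π ^ (p ^ m) + p^(m+1) * a` for some `a`. -/
lemma key_lemma (p : ℕ) (hp : p.Prime) {B : Type*} [CommRing B]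
    (π π₁ : B) (hπ : π = (1 + π₁) ^ p - 1) (m : ℕ) :
    ∃ a : B, π₁ ^ (p ^ (m + 1)) = π ^ (p ^ m) + (p : B) ^ (m + 1) * a := by
  induction m with
  | zero =>
    obtain ⟨r, hr⟩ := exists_add_pow_prime_eq hp (1 : B) π₁
    refine ⟨-(π₁ * r), ?_⟩
    simp only [zero_add, pow_one, pow_zero, one_pow]
    rw [hπ, hr]
    push_cast
    ring
  | succ m ih =>
    obtain ⟨a, ha⟩ := ih
    obtain ⟨r, hr⟩ := step_lemma p hp (π ^ (p ^ m)) a (m + 1) (by omega)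
    refine ⟨r, ?_⟩
    have : π₁ ^ p ^ (m + 2) = (π₁ ^ p ^ (m + 1)) ^ p := by
      rw [← pow_mul, pow_succ]
    rw [this, ha, hr, ← pow_mul, ← pow_succ]

/-- Divided-power estimate: with `π = (1+π₁)^p - 1`, `ξ = π/π₁`, and divided powers
`dξ n = ξ^n/n!` available in a `p`-torsion-free ring `B`, for every `i ≥ 1` and
`k ≥ p^i` the divided power `π^k/k!` lies in `p^{i-1}·B`. -/
theorem stmt13 (p : ℕ) [hp : Fact p.Prime]
    (B : Type*) [CommRing B] [Algebra ℤ_[p] B]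
    (htf : ∀ x : B, (p : B) * x = 0 → x = 0)
    (π π₁ ξ : B) (hπ : π = (1 + π₁) ^ p - 1) (hξ : π = ξ * π₁)
    (dξ : ℕ → B) (hdξ : ∀ n : ℕ, (Nat.factorial n : B) * dξ n = ξ ^ n)
    (i k : ℕ) (hi : 1 ≤ i) (hk : p ^ i ≤ k) :
    ∃ w : B, (Nat.factorial k : B) * w = π ^ k ∧ w ∈ Ideal.span {(p : B) ^ (i - 1)} := by
  set m := i - 1 with hm
  have him : i = m + 1 := by omega
  refine ⟨dξ k * π₁ ^ k, ?_, ?_⟩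
  · rw [← mul_assoc, hdξ k, ← mul_pow, ← hξ]
  · rw [Ideal.mem_span_singleton]
    -- π₁^k = π₁^(k - p^i) * π₁^(p^i), and π₁^(p^i) = π^(p^m) + p^(m+1) a
    obtain ⟨a, ha⟩ := key_lemma p hp.out π π₁ hπ m
    rw [← him] at ha
    have hsplit : π₁ ^ k = π₁ ^ (k - p ^ i) * π₁ ^ (p ^ i) := by
      rw [← pow_add]
      congr 1
      omega
    -- π^(p^m) = (p^m)! * dξ (p^m) * π₁^(p^m), and p^m ∣ (p^m)!
    obtain ⟨c, hc⟩ : p ^ m ∣ Nat.factorial (p ^ m) :=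
      Nat.dvd_factorial (Nat.pow_pos hp.out.pos) le_rfl
    have hπpm : π ^ (p ^ m) = (p : B) ^ m * ((c : B) * dξ (p ^ m) * π₁ ^ (p ^ m)) := by
      rw [hξ, mul_pow, ← hdξ (p ^ m), hc]
      push_cast
      ring
    have hpi : (p : B) ^ i = (p : B) ^ m * p := by rw [him, pow_succ]
    rw [hsplit, ha, hπpm, hpi]
    exact ⟨dξ k * (π₁ ^ (k - p ^ i) * ((c : B) * dξ (p ^ m) * π₁ ^ (p ^ m) + (p : B) * a)),
      by push_cast; ring⟩
end
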